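/- In the construction of the submeasure from a graded fragmentation, if r, s ∈ D with r < s then V_r ⊆ V_s, and if r + s ≤ 1 then V_r ∨ V_s ⊆ V_{r+s}; consequently m is monotone and subadditive. -/

import Mathlib

open Filter Topology

variable {α : Type*}

/-- A fragmentation: an increasing chain of upward closed sets with union `B \\ {0}`. -/
def IsFragmentation [BooleanAlgebra α] (C : ℕ → Set α) : Prop :=
  Monotone C ∧ (∀ n, ∀ a ∈ C n, ∀ b, a ≤ b → b ∈ C n) ∧ (⋃ n, C n) = {a : α | a ≠ ⊥}

/-- The set `{x ⊔ y : x ∈ X, y ∈ Y}`. -/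
def JoinSet [BooleanAlgebra α] (X Y : Set α) : Set α :=
  {c | ∃ x ∈ X, ∃ y ∈ Y, c = x ⊔ y}

/-- For a finite set `s = {n₁ < ... < n_k}` of indices, the set
`U n₁ ∨ ... ∨ U n_k` of joins of elements chosen from the `U nᵢ`. -/
def VofS [BooleanAlgebra α] (U : ℕ → Set α) (s : Finset ℕ) : Set α :=
  {a | ∃ f : ℕ → α, (∀ i ∈ s, f i ∈ U i) ∧ a = s.sup f}

/-- `msub U a = inf {r ∈ D ∪ {1} : a ∈ V_r}` where `D` is the set of finite
dyadic sums `Σ 1/2^{nᵢ}` with `0 < n₁ < ... < n_k` and `V_r = U n₁ ∨ ... ∨ U n_k`. -/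
noncomputable def msub [BooleanAlgebra α] (U : ℕ → Set α) (a : α) : ℝ :=
  sInf ({1} ∪ {r : ℝ | ∃ s : Finset ℕ, s.Nonempty ∧ (∀ i ∈ s, 0 < i) ∧
    r = ∑ i ∈ s, (1 / 2 : ℝ) ^ i ∧ a ∈ VofS U s})

-- auxiliary lemmas

lemma geomIoc (m : ℕ) : ∀ N, m ≤ N → ∑ i ∈ Finset.Ioc m N, (1/2:ℝ)^i = (1/2)^m - (1/2)^N := by
  intro N
  induction N with
  | zero => intro h; interval_cases m; simp
  | succ N ih =>
    intro h
    rcases Nat.lt_or_ge m (N+1) with h' | h'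
    · have hm : m ≤ N := by omega
      rw [show Finset.Ioc m (N+1) = insert (N+1) (Finset.Ioc m N) by
        ext x; simp [Finset.mem_Ioc, Finset.mem_insert]; omega]
      rw [Finset.sum_insert (by simp), ih hm, pow_succ]
      ring
    · have : m = N+1 := by omega
      subst this; simp

lemma half_sum_lt {m : ℕ} {s : Finset ℕ} (h : ∀ i ∈ s, m < i) :
    ∑ i ∈ s, (1/2:ℝ)^i < (1/2)^m := by
  set N := s.sup id ⊔ (m+1) with hN
  have hsub : s ⊆ Finset.Ioc m N := by
    intro i hi
    simp only [Finset.mem_Ioc]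
    exact ⟨h i hi, le_trans (Finset.le_sup (f := id) hi) le_sup_left⟩
  have h1 : ∑ i ∈ s, (1/2:ℝ)^i ≤ ∑ i ∈ Finset.Ioc m N, (1/2:ℝ)^i :=
    Finset.sum_le_sum_of_subset_of_nonneg hsub (by intros; positivity)
  have h2 : ∑ i ∈ Finset.Ioc m N, (1/2:ℝ)^i = (1/2)^m - (1/2)^N :=
    geomIoc m N (by omega)
  have h3 : (0:ℝ) < (1/2)^N := by positivity
  linarith

lemma dyadic_inj : ∀ (k : ℕ) (s t : Finset ℕ), s.card ≤ k → (∀ i ∈ s, 0 < i) → (∀ i ∈ t, 0 < i) →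
    ∑ i ∈ s, (1/2:ℝ)^i = ∑ i ∈ t, (1/2:ℝ)^i → s = t := by
  intro k
  induction k with
  | zero =>
    intro s t hcard _ _ hsum
    have hs : s = ∅ := Finset.card_eq_zero.mp (by omega)
    subst hs
    simp only [Finset.sum_empty] at hsum
    by_contra hne
    have htne : t.Nonempty := Finset.nonempty_iff_ne_empty.mpr (fun h => hne h.symm)
    have : (0:ℝ) < ∑ i ∈ t, (1/2:ℝ)^i :=
      Finset.sum_pos (fun i _ => by positivity) htne
    linarith
  | succ k ih =>
    intro s t hcard hs ht hsum
    rcases Finset.eq_empty_or_nonempty s with rfl | hsne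
    · simp only [Finset.sum_empty] at hsum
      by_contra hne
      have htne : t.Nonempty := Finset.nonempty_iff_ne_empty.mpr (fun h => hne h.symm)
      have : (0:ℝ) < ∑ i ∈ t, (1/2:ℝ)^i := Finset.sum_pos (fun i _ => by positivity) htne
      linarith
    rcases Finset.eq_empty_or_nonempty t with rfl | htne
    · simp only [Finset.sum_empty] at hsum
      have : (0:ℝ) < ∑ i ∈ s, (1/2:ℝ)^i := Finset.sum_pos (fun i _ => by positivity) hsne
      linarith
    set n := s.min' hsne with hn
    set m := t.min' htne with hm
    have hnm : n = m := by
      by_contra hne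
      rcases Nat.lt_or_ge n m with h | h
      · -- all elements of t are > n, so sum t < (1/2)^n ≤ sum s
        have h1 : ∑ i ∈ t, (1/2:ℝ)^i < (1/2)^n :=
          half_sum_lt (fun i hi => lt_of_lt_of_le h (t.min'_le i hi))
        have h2 : ((1:ℝ)/2)^n ≤ ∑ i ∈ s, (1/2:ℝ)^i :=
          Finset.single_le_sum (fun i _ => by positivity) (s.min'_mem hsne)
        linarith
      · have h' : m < n := by omega
        have h1 : ∑ i ∈ s, (1/2:ℝ)^i < (1/2)^m :=
          half_sum_lt (fun i hi => lt_of_lt_of_le h' (s.min'_le i hi))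
        have h2 : ((1:ℝ)/2)^m ≤ ∑ i ∈ t, (1/2:ℝ)^i :=
          Finset.single_le_sum (fun i _ => by positivity) (t.min'_mem htne)
        linarith
    have hns : n ∈ s := s.min'_mem hsne
    have hmt : m ∈ t := t.min'_mem htne
    have hsum' : ∑ i ∈ s.erase n, (1/2:ℝ)^i = ∑ i ∈ t.erase n, (1/2:ℝ)^i := by
      have e1 : ∑ i ∈ s, (1/2:ℝ)^i = (1/2)^n + ∑ i ∈ s.erase n, (1/2:ℝ)^i :=
        (Finset.add_sum_erase s _ hns).symm
      have e2 : ∑ i ∈ t, (1/2:ℝ)^i = (1/2)^n + ∑ i ∈ t.erase n, (1/2:ℝ)^i := by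
        rw [hnm]; exact (Finset.add_sum_erase t _ hmt).symm
      rw [e1, e2] at hsum; linarith
    have hce : (s.erase n).card ≤ k := by
      have := Finset.card_erase_of_mem hns
      omega
    have herase := ih (s.erase n) (t.erase n) hce
      (fun i hi => hs i (Finset.mem_of_mem_erase hi))
      (fun i hi => ht i (Finset.mem_of_mem_erase hi)) hsum'
    have : insert n (s.erase n) = insert n (t.erase n) := by rw [herase]
    rwa [Finset.insert_erase hns, hnm, Finset.insert_erase hmt] at this

lemma binary_repr : ∀ (N k : ℕ), 0 < k → k < 2^N →
    ∃ w : Finset ℕ, w.Nonempty ∧ (∀ i ∈ w, 0 < i ∧ i ≤ N) ∧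
      ∑ i ∈ w, (1/2:ℝ)^i = (k : ℝ)/2^N := by
  intro N
  induction N with
  | zero => intro k h1 h2; omega
  | succ N ih =>
    intro k hk hk2
    rcases Nat.even_or_odd k with ⟨k', rfl⟩ | ⟨k', rfl⟩
    · have hk' : 0 < k' := by omega
      have hk'2 : k' < 2^N := by
        have : 2^(N+1) = 2 * 2^N := by ring
        omega
      obtain ⟨w, hne, hmem, hsum⟩ := ih k' hk' hk'2
      refine ⟨w, hne, fun i hi => ⟨(hmem i hi).1, by have := (hmem i hi).2; omega⟩, ?_⟩
      rw [hsum]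
      have h2N : (2:ℝ)^N ≠ 0 := by positivity
      rw [pow_succ]
      push_cast
      field_simp
      ring
    · rcases Nat.eq_zero_or_pos k' with rfl | hk'
      · refine ⟨{N+1}, ⟨N+1, Finset.mem_singleton_self _⟩, by simp, ?_⟩
        simp [div_pow, one_div]
      · have hk'2 : k' < 2^N := by
          have : 2^(N+1) = 2 * 2^N := by ring
          omega
        obtain ⟨w, hne, hmem, hsum⟩ := ih k' hk' hk'2
        have hNw : N+1 ∉ w := fun h => by have := (hmem _ h).2; omega
        refine ⟨insert (N+1) w, Finset.insert_nonempty _ _,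
          fun i hi => ?_, ?_⟩
        · rcases Finset.mem_insert.mp hi with rfl | hi
          · exact ⟨by omega, le_refl _⟩
          · exact ⟨(hmem i hi).1, by have := (hmem i hi).2; omega⟩
        · rw [Finset.sum_insert hNw, hsum]
          have h2N : (2:ℝ)^N ≠ 0 := by positivity
          rw [pow_succ]
          push_cast
          simp only [div_pow, one_pow]
          field_simp
          ring

lemma sum_as_nat {N : ℕ} {s : Finset ℕ} (h : ∀ i ∈ s, i ≤ N) :
    ∑ i ∈ s, (1/2:ℝ)^i = ((∑ i ∈ s, 2^(N-i) : ℕ) : ℝ)/2^N := by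
  push_cast
  rw [Finset.sum_div]
  apply Finset.sum_congr rfl
  intro i hi
  have hiN := h i hi
  have key : (2:ℝ)^(N-i) * 2^i = 2^N := by
    rw [← pow_add, Nat.sub_add_cancel hiN]
  have h2i : (2:ℝ)^i ≠ 0 := by positivity
  have h2N : (2:ℝ)^N ≠ 0 := by positivity
  rw [div_pow, one_pow, eq_div_iff h2N]
  field_simp
  linarith [key]

lemma exists_repr_add {s t : Finset ℕ} (hsne : s.Nonempty)
    (hs : ∀ i ∈ s, 0 < i) (ht : ∀ i ∈ t, 0 < i)
    (hlt : ∑ i ∈ s, (1/2:ℝ)^i + ∑ i ∈ t, (1/2:ℝ)^i < 1) :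
    ∃ u : Finset ℕ, u.Nonempty ∧ (∀ i ∈ u, 0 < i) ∧
      ∑ i ∈ u, (1/2:ℝ)^i = ∑ i ∈ s, (1/2:ℝ)^i + ∑ i ∈ t, (1/2:ℝ)^i := by
  set N := (s ∪ t).sup id with hN
  have hsN : ∀ i ∈ s, i ≤ N := fun i hi =>
    Finset.le_sup (f := id) (Finset.mem_union_left _ hi)
  have htN : ∀ i ∈ t, i ≤ N := fun i hi =>
    Finset.le_sup (f := id) (Finset.mem_union_right _ hi)
  set A := ∑ i ∈ s, 2^(N-i) with hA
  set B := ∑ i ∈ t, 2^(N-i) with hB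
  have eA : ∑ i ∈ s, (1/2:ℝ)^i = (A:ℝ)/2^N := sum_as_nat hsN
  have eB : ∑ i ∈ t, (1/2:ℝ)^i = (B:ℝ)/2^N := sum_as_nat htN
  have h2N : (0:ℝ) < 2^N := by positivity
  have hApos : 0 < A := by
    obtain ⟨i, hi⟩ := hsne
    have h1 : 0 < 2^(N-i) := by positivity
    have h2 : 2^(N-i) ≤ A := Finset.single_le_sum (f := fun j => 2^(N-j)) (fun j _ => Nat.zero_le _) hi
    omega
  have hsum_lt : ((A:ℝ) + B)/2^N < 1 := by
    rw [add_div, ← eA, ← eB]; exact hlt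
  have hAB : A + B < 2^N := by
    have h1 : ((A+B : ℕ) : ℝ) < ((2^N : ℕ) : ℝ) := by
      push_cast
      rw [div_lt_one h2N] at hsum_lt
      linarith
    exact_mod_cast h1
  obtain ⟨w, hwne, hwmem, hwsum⟩ := binary_repr N (A+B) (by omega) hAB
  exact ⟨w, hwne, fun i hi => (hwmem i hi).1, by
    rw [hwsum, eA, eB]; push_cast; ring⟩

lemma exists_repr_sub {s t : Finset ℕ}
    (hs : ∀ i ∈ s, 0 < i) (ht : ∀ i ∈ t, 0 < i)
    (hlt : ∑ i ∈ s, (1/2:ℝ)^i < ∑ i ∈ t, (1/2:ℝ)^i) :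
    ∃ w : Finset ℕ, w.Nonempty ∧ (∀ i ∈ w, 0 < i) ∧
      ∑ i ∈ s, (1/2:ℝ)^i + ∑ i ∈ w, (1/2:ℝ)^i = ∑ i ∈ t, (1/2:ℝ)^i := by
  set N := (s ∪ t).sup id with hN
  have hsN : ∀ i ∈ s, i ≤ N := fun i hi =>
    Finset.le_sup (f := id) (Finset.mem_union_left _ hi)
  have htN : ∀ i ∈ t, i ≤ N := fun i hi =>
    Finset.le_sup (f := id) (Finset.mem_union_right _ hi)
  set A := ∑ i ∈ t, 2^(N-i) with hA
  set B := ∑ i ∈ s, 2^(N-i) with hB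
  have eA : ∑ i ∈ t, (1/2:ℝ)^i = (A:ℝ)/2^N := sum_as_nat htN
  have eB : ∑ i ∈ s, (1/2:ℝ)^i = (B:ℝ)/2^N := sum_as_nat hsN
  have h2N : (0:ℝ) < 2^N := by positivity
  have hBA : B < A := by
    have : (B:ℝ)/2^N < (A:ℝ)/2^N := by rw [← eA, ← eB]; exact hlt
    have := (div_lt_div_iff_of_pos_right h2N).mp this
    exact_mod_cast this
  have hA2N : A < 2^N := by
    have h1 : ∑ i ∈ t, (1/2:ℝ)^i < 1 := by
      have := half_sum_lt (m := 0) (s := t) ht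
      simpa using this
    rw [eA, div_lt_one h2N] at h1
    have : (A:ℝ) < ((2^N : ℕ) : ℝ) := by push_cast; linarith
    exact_mod_cast this
  obtain ⟨w, hwne, hwmem, hwsum⟩ := binary_repr N (A - B) (by omega) (by omega)
  refine ⟨w, hwne, fun i hi => (hwmem i hi).1, ?_⟩
  rw [hwsum, eA, eB]
  have : ((A - B : ℕ) : ℝ) = (A:ℝ) - B := by
    have : B ≤ A := le_of_lt hBA
    push_cast [this]; ring
  rw [this]; ring


def Vl [BooleanAlgebra α] (U : ℕ → Set α) : List ℕ → Set α
  | [] => {(⊥ : α)}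
  | n :: l => JoinSet (U n) (Vl U l)

lemma Vl_perm [BooleanAlgebra α] (U : ℕ → Set α) {l l' : List ℕ} (p : l.Perm l') :
    Vl U l = Vl U l' := by
  induction p with
  | nil => rfl
  | cons x _ ih => simp only [Vl, ih]
  | swap x y l =>
    ext a
    constructor
    · rintro ⟨u, hu, v, ⟨w, hw, z, hz, rfl⟩, rfl⟩
      exact ⟨w, hw, u ⊔ z, ⟨u, hu, z, hz, rfl⟩, by rw [sup_left_comm]⟩
    · rintro ⟨u, hu, v, ⟨w, hw, z, hz, rfl⟩, rfl⟩
      exact ⟨w, hw, u ⊔ z, ⟨u, hu, z, hz, rfl⟩, by rw [sup_left_comm]⟩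
  | trans _ _ ih1 ih2 => exact ih1.trans ih2

lemma Vl_join [BooleanAlgebra α] (U : ℕ → Set α) :
    ∀ (l1 l2 : List ℕ) (x y : α), x ∈ Vl U l1 → y ∈ Vl U l2 → x ⊔ y ∈ Vl U (l1 ++ l2) := by
  intro l1
  induction l1 with
  | nil =>
    intro l2 x y hx hy
    have : x = ⊥ := hx
    simpa [this] using hy
  | cons n l ih =>
    rintro l2 x y ⟨u, hu, v, hv, rfl⟩ hy
    exact ⟨u, hu, v ⊔ y, ih l2 v y hv hy, by rw [sup_assoc]⟩

lemma Vl_merge [BooleanAlgebra α] (U : ℕ → Set α)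
    (hgr : ∀ n (x y : α), x ∈ U (n+1) → y ∈ U (n+1) → x ⊔ y ∈ U n)
    (n : ℕ) (l : List ℕ) : Vl U ((n+1) :: (n+1) :: l) ⊆ Vl U (n :: l) := by
  rintro a ⟨x, hx, v, ⟨y, hy, z, hz, rfl⟩, rfl⟩
  exact ⟨x ⊔ y, hgr n x y hx hy, z, hz, by rw [sup_assoc]⟩

lemma VofS_empty [BooleanAlgebra α] (U : ℕ → Set α) : VofS U (∅ : Finset ℕ) = {(⊥:α)} := by
  ext a
  simp [VofS]

lemma VofS_insert [BooleanAlgebra α] (U : ℕ → Set α) {n : ℕ} {s : Finset ℕ} (hn : n ∉ s) :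
    VofS U (insert n s) = JoinSet (U n) (VofS U s) := by
  ext a
  constructor
  · rintro ⟨f, hf, rfl⟩
    exact ⟨f n, hf n (Finset.mem_insert_self n s), s.sup f,
      ⟨f, fun i hi => hf i (Finset.mem_insert_of_mem hi), rfl⟩, Finset.sup_insert⟩
  · rintro ⟨x, hx, y, ⟨f, hf, rfl⟩, rfl⟩
    refine ⟨Function.update f n x, ?_, ?_⟩
    · intro i hi
      rcases Finset.mem_insert.mp hi with rfl | hi
      · rwa [Function.update_self]
      · rw [Function.update_of_ne (fun h : i = n => hn (h ▸ hi))]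
        exact hf i hi
    · rw [Finset.sup_insert, Function.update_self]
      congr 1
      exact (Finset.sup_congr rfl (fun i hi =>
        Function.update_of_ne (fun h : i = n => hn (h ▸ hi)) _ _)).symm

lemma Vl_eq_VofS [BooleanAlgebra α] (U : ℕ → Set α) :
    ∀ (l : List ℕ), l.Nodup → Vl U l = VofS U l.toFinset := by
  intro l
  induction l with
  | nil => intro _; simp [Vl, VofS_empty]
  | cons n l ih =>
    intro hnd
    have hn : n ∉ l.toFinset := by
      simp only [List.mem_toFinset]
      exact (List.nodup_cons.mp hnd).1
    rw [List.toFinset_cons, VofS_insert U hn]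
    simp only [Vl, ih (List.nodup_cons.mp hnd).2]

lemma VofS_eq_Vl [BooleanAlgebra α] (U : ℕ → Set α) (s : Finset ℕ) :
    VofS U s = Vl U s.toList := by
  rw [Vl_eq_VofS U s.toList s.nodup_toList, Finset.toList_toFinset]

lemma bot_mem_VofS [BooleanAlgebra α] (U : ℕ → Set α) (hbot : ∀ n, (⊥:α) ∈ U n)
    (s : Finset ℕ) : (⊥:α) ∈ VofS U s :=
  ⟨fun _ => ⊥, fun i _ => hbot i, by simp⟩

lemma core_lemma [BooleanAlgebra α] (U : ℕ → Set α)
    (hgr : ∀ n (x y : α), x ∈ U (n+1) → y ∈ U (n+1) → x ⊔ y ∈ U n) :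
    ∀ (k : ℕ) (l : List ℕ), l.length ≤ k → (∀ i ∈ l, 0 < i) →
    ∀ u : Finset ℕ, (∀ i ∈ u, 0 < i) →
    (l.map fun i => (1/2:ℝ)^i).sum = ∑ i ∈ u, (1/2:ℝ)^i →
    Vl U l ⊆ VofS U u := by
  intro k
  induction k with
  | zero =>
    intro l hlen hpos u hupos hsum
    have hl : l = [] := List.length_eq_zero_iff.mp (by omega)
    subst hl
    have heq : (∅ : Finset ℕ) = u :=
      dyadic_inj 0 ∅ u (by simp) (by simp) hupos (by simpa using hsum)
    rw [← heq, VofS_empty]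
    exact subset_refl _
  | succ k ih =>
    intro l hlen hpos u hupos hsum
    by_cases hnd : l.Nodup
    · have hts : l.toFinset.sum (fun i => (1/2:ℝ)^i) = (l.map fun i => (1/2:ℝ)^i).sum :=
        List.sum_toFinset _ hnd
      have heq : l.toFinset = u :=
        dyadic_inj l.toFinset.card l.toFinset u (le_refl _)
          (fun i hi => hpos i (List.mem_toFinset.mp hi)) hupos (by rw [hts, hsum])
      rw [Vl_eq_VofS U l hnd, heq]
    · obtain ⟨n, hcnt⟩ : ∃ n, 2 ≤ l.count n := by
        rw [List.nodup_iff_count_le_one] at hnd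
        push_neg at hnd
        obtain ⟨n, hn⟩ := hnd
        exact ⟨n, by omega⟩
      have hmem : n ∈ l := List.count_pos_iff.mp (by omega)
      have hmem2 : n ∈ l.erase n := by
        rw [← List.count_pos_iff, List.count_erase_self]
        omega
      set l₂ := (l.erase n).erase n with hl₂
      have p : l.Perm (n :: n :: l₂) :=
        (List.perm_cons_erase hmem).trans ((List.perm_cons_erase hmem2).cons n)
      have hsump : (l.map fun i => (1/2:ℝ)^i).sum = ((n :: n :: l₂).map fun i => (1/2:ℝ)^i).sum :=
        (p.map _).sum_eq
      have hrest : (0:ℝ) ≤ (l₂.map fun i => (1/2:ℝ)^i).sum := by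
        apply List.sum_nonneg
        intro x hx
        obtain ⟨i, _, rfl⟩ := List.mem_map.mp hx
        positivity
      have hnpos : 0 < n := hpos n hmem
      have hpow : (1/2:ℝ)^n = (1/2)^(n-1) * (1/2) := by
        rw [← pow_succ]
        congr 1
        omega
      have hult : ∑ i ∈ u, (1/2:ℝ)^i < 1 := by
        have := half_sum_lt (m := 0) hupos
        simpa using this
      have hn2 : 2 ≤ n := by
        by_contra h
        have hn1 : n = 1 := by omega
        subst hn1
        simp only [List.map_cons, List.sum_cons] at hsump
        rw [hsump] at hsum
        norm_num at hsum
        linarith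
      have hlenl : l.length = l₂.length + 2 := by
        have := p.length_eq
        simpa using this
      have hmerge : Vl U (n :: n :: l₂) ⊆ Vl U ((n-1) :: l₂) := by
        have := Vl_merge U hgr (n-1) l₂
        have hn1 : n - 1 + 1 = n := by omega
        rwa [hn1] at this
      have happly : Vl U ((n-1) :: l₂) ⊆ VofS U u := by
        apply ih ((n-1) :: l₂) (by simp; omega) ?_ u hupos ?_
        · intro i hi
          rcases List.mem_cons.mp hi with rfl | hi
          · omega
          · exact hpos i (p.symm.subset (List.mem_cons_of_mem _ (List.mem_cons_of_mem _ hi)))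
        · simp only [List.map_cons, List.sum_cons] at hsump ⊢
          rw [← hsum, hsump, hpow]
          ring
      rw [Vl_perm U p]
      exact hmerge.trans happly

def Sset [BooleanAlgebra α] (U : ℕ → Set α) (a : α) : Set ℝ :=
  {1} ∪ {r : ℝ | ∃ s : Finset ℕ, s.Nonempty ∧ (∀ i ∈ s, 0 < i) ∧
    r = ∑ i ∈ s, (1 / 2 : ℝ) ^ i ∧ a ∈ VofS U s}

lemma msub_eq_sInf [BooleanAlgebra α] (U : ℕ → Set α) (a : α) :
    msub U a = sInf (Sset U a) := rfl

lemma Sset_nonneg [BooleanAlgebra α] (U : ℕ → Set α) (a : α) :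
    ∀ r ∈ Sset U a, (0:ℝ) ≤ r := by
  rintro r (hr | ⟨s, _, _, rfl, _⟩)
  · rw [Set.mem_singleton_iff] at hr; rw [hr]; norm_num
  · exact Finset.sum_nonneg (fun i _ => by positivity)

lemma Sset_bdd [BooleanAlgebra α] (U : ℕ → Set α) (a : α) : BddBelow (Sset U a) :=
  ⟨0, fun r hr => Sset_nonneg U a r hr⟩

lemma Sset_ne [BooleanAlgebra α] (U : ℕ → Set α) (a : α) : (Sset U a).Nonempty :=
  ⟨1, Or.inl rfl⟩


theorem stmt16 [BooleanAlgebra α] (C U : ℕ → Set α)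
    (hC0 : C 0 = ∅) (hfrag : IsFragmentation C)
    (hgraded : ∀ n : ℕ, ∀ a b : α, a ⊔ b ∈ C n → a ∈ C (n + 1) ∨ b ∈ C (n + 1))
    (hU : ∀ n, U n = (C n)ᶜ) :
    (∀ s t : Finset ℕ, s.Nonempty → t.Nonempty →
      (∀ i ∈ s, 0 < i) → (∀ i ∈ t, 0 < i) →
      (∑ i ∈ s, (1 / 2 : ℝ) ^ i) < (∑ i ∈ t, (1 / 2 : ℝ) ^ i) →
      VofS U s ⊆ VofS U t) ∧
    (∀ s t u : Finset ℕ, s.Nonempty → t.Nonempty → u.Nonempty →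
      (∀ i ∈ s, 0 < i) → (∀ i ∈ t, 0 < i) → (∀ i ∈ u, 0 < i) →
      (∑ i ∈ u, (1 / 2 : ℝ) ^ i) = (∑ i ∈ s, (1 / 2 : ℝ) ^ i) + ∑ i ∈ t, (1 / 2 : ℝ) ^ i →
      (∑ i ∈ s, (1 / 2 : ℝ) ^ i) + (∑ i ∈ t, (1 / 2 : ℝ) ^ i) ≤ 1 →
      JoinSet (VofS U s) (VofS U t) ⊆ VofS U u) ∧
    (∀ a b : α, a ≤ b → msub U a ≤ msub U b) ∧
    (∀ a b : α, msub U (a ⊔ b) ≤ msub U a + msub U b) := by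
  have hbot : ∀ n, (⊥:α) ∈ U n := by
    intro n
    rw [hU]
    intro h
    have h2 : (⊥:α) ∈ ⋃ n, C n := Set.mem_iUnion.mpr ⟨n, h⟩
    rw [hfrag.2.2] at h2
    exact h2 rfl
  have hdown : ∀ n (x y : α), x ≤ y → y ∈ U n → x ∈ U n := by
    intro n x y hxy hy
    rw [hU] at hy ⊢
    intro hx
    exact hy (hfrag.2.1 n x hx y hxy)
  have hgr : ∀ n (x y : α), x ∈ U (n+1) → y ∈ U (n+1) → x ⊔ y ∈ U n := by
    intro n x y hx hy
    rw [hU] at hx hy ⊢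
    intro h
    rcases hgraded n x y h with h' | h'
    · exact hx h'
    · exact hy h'
  have part2 : ∀ s t u : Finset ℕ, s.Nonempty → t.Nonempty → u.Nonempty →
      (∀ i ∈ s, 0 < i) → (∀ i ∈ t, 0 < i) → (∀ i ∈ u, 0 < i) →
      (∑ i ∈ u, (1 / 2 : ℝ) ^ i) = (∑ i ∈ s, (1 / 2 : ℝ) ^ i) + ∑ i ∈ t, (1 / 2 : ℝ) ^ i →
      (∑ i ∈ s, (1 / 2 : ℝ) ^ i) + (∑ i ∈ t, (1 / 2 : ℝ) ^ i) ≤ 1 →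
      JoinSet (VofS U s) (VofS U t) ⊆ VofS U u := by
    intro s t u _ _ _ hps hpt hpu hsum _
    rintro c ⟨x, hx, y, hy, rfl⟩
    rw [VofS_eq_Vl] at hx hy
    have hxy := Vl_join U s.toList t.toList x y hx hy
    refine core_lemma U hgr (s.toList ++ t.toList).length _ le_rfl ?_ u hpu ?_ hxy
    · intro i hi
      rcases List.mem_append.mp hi with hi | hi
      · exact hps i (Finset.mem_toList.mp hi)
      · exact hpt i (Finset.mem_toList.mp hi)
    · rw [List.map_append, List.sum_append, Finset.sum_map_toList, Finset.sum_map_toList, hsum]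
  have part1 : ∀ s t : Finset ℕ, s.Nonempty → t.Nonempty →
      (∀ i ∈ s, 0 < i) → (∀ i ∈ t, 0 < i) →
      (∑ i ∈ s, (1 / 2 : ℝ) ^ i) < (∑ i ∈ t, (1 / 2 : ℝ) ^ i) →
      VofS U s ⊆ VofS U t := by
    intro s t hs ht hps hpt hlt
    obtain ⟨w, hwne, hwpos, hwsum⟩ := exists_repr_sub hps hpt hlt
    intro a ha
    have h1lt : ∑ i ∈ t, (1/2:ℝ)^i < 1 := by
      have := half_sum_lt (m := 0) hpt
      simpa using this
    have hmem : a ⊔ (⊥:α) ∈ VofS U t := part2 s w t hs hwne ht hps hwpos hpt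
      hwsum.symm (by linarith) ⟨a, ha, ⊥, bot_mem_VofS U hbot w, rfl⟩
    rwa [sup_bot_eq] at hmem
  refine ⟨part1, part2, ?_, ?_⟩
  · -- monotone
    intro a b hab
    rw [msub_eq_sInf, msub_eq_sInf]
    apply csInf_le_csInf (Sset_bdd U a) (Sset_ne U b)
    rintro r (hr | ⟨s, hsne, hpos, rfl, f, hf, hb⟩)
    · exact Or.inl hr
    · refine Or.inr ⟨s, hsne, hpos, rfl, fun i => a ⊓ f i, fun i hi =>
        hdown i _ (f i) inf_le_right (hf i hi), ?_⟩
      have h1 : a ⊓ s.sup f = s.sup fun i => a ⊓ f i := Finset.sup_inf_distrib_left s f a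
      rw [← h1, ← hb, inf_eq_left.mpr hab]
  · -- subadditive
    intro a b
    have key : ∀ r ∈ Sset U a, ∀ r' ∈ Sset U b, msub U (a ⊔ b) ≤ r + r' := by
      intro r hr r' hr'
      rcases le_or_gt 1 (r + r') with h1 | h1
      · calc msub U (a ⊔ b) ≤ 1 := csInf_le (Sset_bdd U _) (Or.inl rfl)
          _ ≤ r + r' := h1
      · rcases hr with hr1 | ⟨s, hsne, hspos, rfl, ha⟩
        · rw [Set.mem_singleton_iff] at hr1
          have := Sset_nonneg U b r' hr'
          rw [hr1] at h1
          linarith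
        rcases hr' with hr1 | ⟨t, htne, htpos, rfl, hb⟩
        · rw [Set.mem_singleton_iff] at hr1
          have := Sset_nonneg U a _ (Or.inr ⟨s, hsne, hspos, rfl, ha⟩)
          rw [hr1] at h1
          linarith
        obtain ⟨u, hune, hupos, husum⟩ := exists_repr_add hsne hspos htpos h1
        have hmem : a ⊔ b ∈ VofS U u := part2 s t u hsne htne hune hspos htpos hupos
          husum (le_of_lt h1) ⟨a, ha, b, hb, rfl⟩
        calc msub U (a ⊔ b) ≤ ∑ i ∈ u, (1/2:ℝ)^i :=
              csInf_le (Sset_bdd U _) (Or.inr ⟨u, hune, hupos, rfl, hmem⟩)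
          _ = _ := husum
    have h1 : msub U (a ⊔ b) - msub U b ≤ msub U a := by
      rw [msub_eq_sInf U a]
      apply le_csInf (Sset_ne U a)
      intro r hr
      rw [sub_le_iff_le_add]
      have h2 : msub U (a ⊔ b) - r ≤ msub U b := by
        rw [msub_eq_sInf U b]
        apply le_csInf (Sset_ne U b)
        intro r' hr'
        rw [sub_le_iff_le_add]
        have := key r hr r' hr'
        linarith
      linarith
    linarith
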